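/- Given weights (w_1,...,w_{n+1}) in the open simplex (all w_i > 0, ∑ w_i = 1), observations X_1,...,X_n, a threshold μ* and parameters B, γ > 0, and a convex bijective-on-ℝ⁺ function h with h(0)=0: there exists x ≥ μ* with ∑_{i≤n} w_i X_i + w_{n+1} x ≥ μ* and ∑_{i≤n} w_i h(|X_i − μ*|) + w_{n+1}(h(x − μ*) − γ) ≤ B if and only if h( max{0, (1/w_{n+1}) ∑_{i≤n} w_i (μ* − X_i)} ) ≤ B + γ + (1/w_{n+1}) ∑_{i≤n} w_i (B − h(|X_i − μ*|)). -/

import Mathlib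

open Finset

/-- Closed-form equivalence of the `h`-NPTS acceptance criterion: for weights in the
open simplex, observations `X_1,...,X_n`, threshold `μ*` and parameters `B, γ > 0`,
there exists `x ≥ μ*` with `∑_{i≤n} wᵢXᵢ + w_{n+1}x ≥ μ*` and
`∑_{i≤n} wᵢ h(|Xᵢ - μ*|) + w_{n+1}(h(x - μ*) - γ) ≤ B` if and only if
`h(max{0, (1/w_{n+1}) ∑ᵢ wᵢ(μ* - Xᵢ)}) ≤ B + γ + (1/w_{n+1}) ∑ᵢ wᵢ(B - h(|Xᵢ - μ*|))`. -/
theorem stmt18 (n : ℕ) (w : Fin (n + 1) → ℝ) (hw : ∀ i, 0 < w i)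
    (hsum : ∑ i, w i = 1)
    (X : Fin n → ℝ) (μs B γ : ℝ) (hγ : 0 < γ)
    (h : ℝ → ℝ) (h0 : h 0 = 0) (hconv : ConvexOn ℝ (Set.Ici 0) h)
    (hmono : StrictMonoOn h (Set.Ici 0)) (hpos : ∀ x ≥ (0 : ℝ), 0 ≤ h x)
    (hcont : ContinuousOn h (Set.Ici 0)) :
    (∃ x ≥ μs,
        μs ≤ ∑ i, w i.castSucc * X i + w (Fin.last n) * x ∧
        ∑ i, w i.castSucc * h |X i - μs| + w (Fin.last n) * (h (x - μs) - γ) ≤ B)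
      ↔ h (max 0 ((w (Fin.last n))⁻¹ * ∑ i, w i.castSucc * (μs - X i)))
          ≤ B + γ + (w (Fin.last n))⁻¹ * ∑ i, w i.castSucc * (B - h |X i - μs|) := by
  set wl := w (Fin.last n) with hwl_def
  have hwl : 0 < wl := hw _
  have hinv : wl * wl⁻¹ = 1 := mul_inv_cancel₀ hwl.ne'
  have hsum' : ∑ i : Fin n, w i.castSucc = 1 - wl := by
    have h1 : ∑ i : Fin (n+1), w i = ∑ i : Fin n, w i.castSucc + w (Fin.last n) :=
      Fin.sum_univ_castSucc w
    rw [h1] at hsum; linarith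
  set S := ∑ i : Fin n, w i.castSucc * (μs - X i) with hS
  set T := ∑ i : Fin n, w i.castSucc * h |X i - μs| with hT
  have hSid : S = μs * (1 - wl) - ∑ i : Fin n, w i.castSucc * X i := by
    rw [hS, ← hsum', Finset.mul_sum, ← Finset.sum_sub_distrib]
    exact Finset.sum_congr rfl fun i _ => by ring
  have hCid : B + γ + wl⁻¹ * ∑ i : Fin n, w i.castSucc * (B - h |X i - μs|)
      = γ + wl⁻¹ * (B - T) := by
    have heq : ∑ i : Fin n, w i.castSucc * (B - h |X i - μs|)
        = (1 - wl) * B - T := by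
      rw [hT, ← hsum', Finset.sum_mul, ← Finset.sum_sub_distrib]
      exact Finset.sum_congr rfl fun i _ => by ring
    rw [heq]
    field_simp
    ring
  rw [hCid]
  set m := max 0 (wl⁻¹ * S) with hm
  constructor
  · rintro ⟨x, hx1, hx2, hx3⟩
    have hSle : S ≤ wl * (x - μs) := by rw [hSid]; nlinarith
    have hml : m ≤ x - μs := by
      apply max_le (by linarith)
      calc wl⁻¹ * S ≤ wl⁻¹ * (wl * (x - μs)) :=
            mul_le_mul_of_nonneg_left hSle (inv_nonneg.mpr hwl.le)
        _ = x - μs := by field_simp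
    have hmono' : h m ≤ h (x - μs) := by
      rcases eq_or_lt_of_le hml with heq | hlt
      · rw [heq]
      · exact le_of_lt (hmono (Set.mem_Ici.mpr (by rw [hm]; exact le_max_left _ _)) (by simp; linarith) hlt)
    have hx3' : h (x - μs) ≤ γ + wl⁻¹ * (B - T) := by
      have h1 : wl * (h (x - μs) - γ) ≤ B - T := by linarith
      have h2 : wl⁻¹ * (wl * (h (x - μs) - γ)) ≤ wl⁻¹ * (B - T) :=
        mul_le_mul_of_nonneg_left h1 (inv_nonneg.mpr hwl.le)
      have h3 : wl⁻¹ * (wl * (h (x - μs) - γ)) = h (x - μs) - γ := by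
        field_simp
      linarith
    linarith
  · intro hC
    refine ⟨μs + m, by simp [hm, le_max_left], ?_, ?_⟩
    · have hml : wl⁻¹ * S ≤ m := le_max_right _ _
      have h2 : wl * (wl⁻¹ * S) ≤ wl * m := mul_le_mul_of_nonneg_left hml hwl.le
      have h3 : wl * (wl⁻¹ * S) = S := by field_simp
      have h4 : S ≤ wl * m := by linarith
      rw [hSid] at h4
      nlinarith
    · have heq : μs + m - μs = m := by ring
      rw [heq]
      have h1 : h m - γ ≤ wl⁻¹ * (B - T) := by linarith
      have h2 : wl * (h m - γ) ≤ wl * (wl⁻¹ * (B - T)) :=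
        mul_le_mul_of_nonneg_left h1 hwl.le
      have h3 : wl * (wl⁻¹ * (B - T)) = B - T := by field_simp
      linarith
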